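/- Let F be the free group on generators x_{i,j} indexed by (i,j) ∈ ℤ², and let φ : F → F be any automorphism that induces on the abelianization the shift x̃_{i,j} ↦ x̃_{i+m,j+n} for some fixed (m,n) ∈ ℤ². Then the bi-ordering of F defined via the Magnus expansion into ℤ[[X_{i,j}]] (comparing power series by the coefficient of the first term, in degree-lexicographic order with subscripts ordered lexicographically, at which they differ) is invariant under φ. -/

import Mathlib

/-- Words in the noncommuting variables `X_{i,j}`, `(i,j) ∈ ℤ²`. -/
abbrev MagnusWord : Type := List (ℤ × ℤ)

/-- Formal power series in the noncommuting variables `X_{i,j}` with integer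
coefficients, viewed as coefficient functions on words. -/
abbrev MagnusSeries : Type := MagnusWord → ℤ

/-- The constant series `1`. -/
def oneSeries : MagnusSeries := fun w => if w = [] then 1 else 0

/-- Convolution (Cauchy) product of two series. -/
def convSeries (f g : MagnusSeries) : MagnusSeries := fun w =>
  ∑ i ∈ Finset.range (w.length + 1), f (w.take i) * g (w.drop i)

/-- The Magnus series of a single letter of the free group:
`x_{i,j} ↦ 1 + X_{i,j}` and `x_{i,j}⁻¹ ↦ 1 - X_{i,j} + X_{i,j}² - ⋯`. -/
def letterSeries : (ℤ × ℤ) × Bool → MagnusSeries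
  | (a, true) => fun w => if w = [] ∨ w = [a] then 1 else 0
  | (a, false) => fun w => if ∀ x ∈ w, x = a then (-1 : ℤ) ^ w.length else 0

/-- The Magnus expansion `μ : F → ℤ[[X_{i,j}]]` of an element of the free group
on the generators `x_{i,j}`, `(i,j) ∈ ℤ²`, obtained by multiplying out the
series of the letters of the reduced word. -/
def magnus (u : FreeGroup (ℤ × ℤ)) : MagnusSeries :=
  ((FreeGroup.toWord u).map letterSeries).foldr convSeries oneSeries

/-- The degree-lexicographic strict order on words: first by degree (length),
then lexicographically, subscripts `(i,j)` being compared lexicographically. -/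
def degLexLt (w w' : MagnusWord) : Prop :=
  w.length < w'.length ∨
    (w.length = w'.length ∧
      List.Lex (Prod.Lex ((· < ·) : ℤ → ℤ → Prop) ((· < ·) : ℤ → ℤ → Prop)) w w')

/-- Positivity in the Magnus bi-ordering of the free group: `u` is positive if
the coefficient of the degree-lexicographically first term at which `μ(u)`
differs from `1` is positive. -/
def MagnusPos (u : FreeGroup (ℤ × ℤ)) : Prop :=
  ∃ w : MagnusWord,
    (∀ w' : MagnusWord, degLexLt w' w → magnus u w' = oneSeries w') ∧
    oneSeries w < magnus u w

namespace MagnusProof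

def MS : Type := MagnusWord → ℤ

namespace MS

def coeff (f : MS) : MagnusWord → ℤ := f

lemma ext' {f g : MS} (h : ∀ w, coeff f w = coeff g w) : f = g := funext h

instance : AddCommGroup MS := inferInstanceAs (AddCommGroup (MagnusWord → ℤ))
instance : One MS := ⟨oneSeries⟩
instance : Mul MS := ⟨fun f g => convSeries f g⟩

lemma coeff_one (w : MagnusWord) : coeff (1 : MS) w = if w = [] then 1 else 0 := rfl
lemma coeff_mul (f g : MS) (w : MagnusWord) :
    coeff (f * g) w
      = ∑ i ∈ Finset.range (w.length + 1), coeff f (w.take i) * coeff g (w.drop i) := rfl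
lemma coeff_add (f g : MS) (w : MagnusWord) : coeff (f + g) w = coeff f w + coeff g w := rfl
lemma coeff_zero (w : MagnusWord) : coeff (0 : MS) w = 0 := rfl
lemma coeff_neg (f : MS) (w : MagnusWord) : coeff (-f) w = - coeff f w := rfl
lemma coeff_sub (f g : MS) (w : MagnusWord) : coeff (f - g) w = coeff f w - coeff g w := rfl

def coeffHom (w : MagnusWord) : MS →+ ℤ :=
  { toFun := fun f => coeff f w, map_zero' := rfl, map_add' := fun _ _ => rfl }

lemma coeff_sum {ι : Type*} (s : Finset ι) (f : ι → MS) (w : MagnusWord) :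
    coeff (∑ i ∈ s, f i) w = ∑ i ∈ s, coeff (f i) w :=
  map_sum (coeffHom w) f s

lemma one_mul' (f : MS) : 1 * f = f := by
  apply ext'; intro w
  rw [coeff_mul]
  rw [Finset.sum_eq_single 0]
  · simp [coeff_one]
  · intro b hb hb0
    simp only [Finset.mem_range] at hb
    have : w.take b ≠ [] := by
      intro hcon
      have := congrArg List.length hcon
      simp only [List.length_take, List.length_nil] at this
      omega
    simp [coeff_one, this]
  · intro h; simp at h

lemma mul_one' (f : MS) : f * 1 = f := by
  apply ext'; intro w
  rw [coeff_mul]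
  rw [Finset.sum_eq_single w.length]
  · simp [coeff_one]
  · intro b hb hbn
    simp only [Finset.mem_range] at hb
    have : w.drop b ≠ [] := by
      intro hcon
      have := congrArg List.length hcon
      simp only [List.length_drop, List.length_nil] at this
      omega
    simp [coeff_one, this]
  · intro h; simp at h

lemma mul_assoc' (f g h : MS) : f * g * h = f * (g * h) := by
  apply ext'; intro w
  set n := w.length with hn
  rw [coeff_mul]
  have L1 : ∀ j ∈ Finset.range (n+1),
      coeff (f * g) (w.take j) * coeff h (w.drop j)
        = ∑ i ∈ Finset.range (j+1),
            coeff f (w.take i) * (coeff g ((w.drop i).take (j - i)) * coeff h (w.drop j)) := by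
    intro j hj
    simp only [Finset.mem_range] at hj
    rw [coeff_mul, Finset.sum_mul]
    have hlen : (w.take j).length = j := by
      rw [List.length_take]; omega
    rw [hlen]
    refine Finset.sum_congr rfl ?_
    intro i hi
    simp only [Finset.mem_range] at hi
    rw [List.take_take, min_eq_left (by omega : i ≤ j), List.drop_take]
    ring
  rw [Finset.sum_congr rfl L1]
  rw [coeff_mul]
  have L2 : ∀ i ∈ Finset.range (n+1),
      coeff f (w.take i) * coeff (g * h) (w.drop i)
        = ∑ t ∈ Finset.range (n - i + 1),
            coeff f (w.take i) * (coeff g ((w.drop i).take t) * coeff h (w.drop (i + t))) := by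
    intro i hi
    simp only [Finset.mem_range] at hi
    rw [coeff_mul, Finset.mul_sum]
    have hlen : (w.drop i).length = n - i := by rw [List.length_drop]
    rw [hlen]
    refine Finset.sum_congr rfl ?_
    intro t ht
    rw [List.drop_drop]
  rw [Finset.sum_congr rfl L2]
  have L3 : ∀ i ∈ Finset.range (n+1),
      (∑ t ∈ Finset.range (n - i + 1),
        coeff f (w.take i) * (coeff g ((w.drop i).take t) * coeff h (w.drop (i + t))))
      = ∑ j ∈ Finset.Ico i (n+1),
          coeff f (w.take i) * (coeff g ((w.drop i).take (j - i)) * coeff h (w.drop j)) := by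
    intro i hi
    simp only [Finset.mem_range] at hi
    refine Finset.sum_nbij' (fun t => i + t) (fun j => j - i) ?_ ?_ ?_ ?_ ?_
    · intro t ht; simp only [Finset.mem_range] at ht; simp only [Finset.mem_Ico]; omega
    · intro j hj; simp only [Finset.mem_Ico] at hj; simp only [Finset.mem_range]; omega
    · intro t _; show i + t - i = t; omega
    · intro j hj; simp only [Finset.mem_Ico] at hj; show i + (j - i) = j; omega
    · intro t _
      show _ = coeff f _ * (coeff g (List.take (i + t - i) _) * coeff h _)
      have : i + t - i = t := by omega
      rw [this]
  rw [Finset.sum_congr rfl L3]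
  refine Finset.sum_comm' ?_
  intro j i
  simp only [Finset.mem_range, Finset.mem_Ico]
  omega

lemma left_distrib' (f g h : MS) : f * (g + h) = f * g + f * h := by
  apply ext'; intro w
  simp [coeff_mul, coeff_add, Finset.sum_add_distrib, mul_add]

lemma right_distrib' (f g h : MS) : (f + g) * h = f * h + g * h := by
  apply ext'; intro w
  simp [coeff_mul, coeff_add, Finset.sum_add_distrib, add_mul]

lemma zero_mul' (f : MS) : 0 * f = 0 := by
  apply ext'; intro w; simp [coeff_mul, coeff_zero]

lemma mul_zero' (f : MS) : f * 0 = 0 := by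
  apply ext'; intro w; simp [coeff_mul, coeff_zero]

instance instRing : Ring MS :=
  { (inferInstance : AddCommGroup MS) with
    mul := (· * ·)
    one := 1
    mul_assoc := mul_assoc'
    one_mul := one_mul'
    mul_one := mul_one'
    left_distrib := left_distrib'
    right_distrib := right_distrib'
    zero_mul := zero_mul'
    mul_zero := mul_zero' }

end MS
end MagnusProof

namespace MagnusProof
namespace MS

def lp (a : ℤ × ℤ) : MS := letterSeries (a, true)
def ln (a : ℤ × ℤ) : MS := letterSeries (a, false)

lemma coeff_lp (a : ℤ × ℤ) (w : MagnusWord) :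
    coeff (lp a) w = if w = [] ∨ w = [a] then 1 else 0 := rfl
lemma coeff_ln (a : ℤ × ℤ) (w : MagnusWord) :
    coeff (ln a) w = if ∀ x ∈ w, x = a then (-1 : ℤ) ^ w.length else 0 := rfl

lemma lp_mul_ln (a : ℤ × ℤ) : lp a * ln a = 1 := by
  apply ext'; intro w
  rw [coeff_mul]
  cases w with
  | nil => simp [coeff_lp, coeff_ln, coeff_one]
  | cons b t =>
    rw [Finset.sum_range_succ']
    have h1 : ∀ i ∈ Finset.range (List.length (b :: t)),
        coeff (lp a) ((b :: t).take (i+1)) * coeff (ln a) ((b :: t).drop (i+1))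
          = (if b = a ∧ t.take i = [] then 1 else 0) * coeff (ln a) (t.drop i) := by
      intro i hi
      rw [List.take_succ_cons, List.drop_succ_cons]
      congr 1
      rw [coeff_lp]
      by_cases hb : b = a ∧ t.take i = []
      · rcases hb with ⟨rfl, h2⟩
        simp [h2]
      · rw [if_neg, if_neg hb]
        rintro (hcon | hcon)
        · exact (List.cons_ne_nil _ _) hcon
        · rw [List.cons_eq_cons] at hcon
          exact hb ⟨hcon.1, hcon.2⟩
    rw [Finset.sum_congr rfl h1]
    simp only [List.take_nil, List.drop_nil, List.take_zero, List.drop_zero, coeff_lp,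
      List.length_cons]
    by_cases hb : b = a
    · subst hb
      rw [Finset.sum_eq_single 0]
      · simp only [List.take_zero, List.drop_zero, and_self, if_pos rfl, one_mul]
        rw [coeff_ln, coeff_ln, coeff_one]
        by_cases ht : ∀ x ∈ t, x = b
        · have hbt : ∀ x ∈ b :: t, x = b := by
            intro x hx; rcases List.mem_cons.mp hx with rfl | hx; rfl; exact ht x hx
          rw [if_pos ht, if_pos hbt]
          simp [List.length_cons, pow_succ]
        · have hbt : ¬ ∀ x ∈ b :: t, x = b := by
            intro hcon; exact ht (fun x hx => hcon x (List.mem_cons_of_mem _ hx))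
          rw [if_neg ht, if_neg hbt]
          simp
      · intro i hi hi0
        simp only [Finset.mem_range] at hi
        have : t.take i ≠ [] := by
          intro hcon
          have := congrArg List.length hcon
          simp only [List.length_take, List.length_nil] at this
          omega
        simp [this]
      · intro h; simp at h
    · have : ∀ i ∈ Finset.range (t.length + 1),
          (if b = a ∧ t.take i = [] then (1:ℤ) else 0) * coeff (ln a) (t.drop i) = 0 := by
        intro i _
        simp [hb]
      rw [Finset.sum_congr rfl this]
      have hbt : ¬ ∀ x ∈ b :: t, x = a := by
        intro hcon; exact hb (hcon b List.mem_cons_self)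
      rw [coeff_ln, if_neg hbt, coeff_one]
      simp

lemma ln_mul_lp (a : ℤ × ℤ) : ln a * lp a = 1 := by
  apply ext'; intro w
  rw [coeff_mul]
  rcases List.eq_nil_or_concat w with rfl | ⟨t, c, rfl⟩
  · simp [coeff_lp, coeff_ln, coeff_one]
  · have hlen : (t.concat c).length = t.length + 1 := by simp
    rw [hlen, Finset.sum_range_succ]
    have hend : (t.concat c).take (t.length + 1) = t.concat c := by
      apply List.take_of_length_le; omega
    have hdrop : (t.concat c).drop (t.length + 1) = [] := by
      apply List.drop_eq_nil_of_le; omega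
    rw [hend, hdrop]
    have h1 : ∀ i ∈ Finset.range (t.length + 1),
        coeff (ln a) ((t.concat c).take i) * coeff (lp a) ((t.concat c).drop i)
          = coeff (ln a) (t.take i) *
              (if i = t.length ∧ c = a then 1 else 0) := by
      intro i hi
      simp only [Finset.mem_range] at hi
      have htake : (t.concat c).take i = t.take i := by
        rw [List.concat_eq_append, List.take_append_of_le_length (by omega)]
      have hdrop2 : (t.concat c).drop i = t.drop i ++ [c] := by
        rw [List.concat_eq_append, List.drop_append_of_le_length (by omega)]
      rw [htake, hdrop2]
      congr 1
      rw [coeff_lp]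
      by_cases hc : i = t.length ∧ c = a
      · rcases hc with ⟨rfl, rfl⟩
        simp [List.drop_length]
      · rw [if_neg, if_neg hc]
        rintro (hcon | hcon)
        · exact (by simp : t.drop i ++ [c] ≠ []) hcon
        · have h3 : (t.drop i ++ [c]).length = 1 := by rw [hcon]; rfl
          simp only [List.length_append, List.length_drop, List.length_singleton] at h3
          have hi2 : i = t.length := by omega
          subst hi2
          simp only [List.drop_length, List.nil_append] at hcon
          have : c = a := by simpa using hcon
          exact hc ⟨rfl, this⟩
    rw [Finset.sum_congr rfl h1]
    by_cases hc : c = a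
    · subst hc
      rw [Finset.sum_eq_single t.length]
      · rw [List.take_length, if_pos ⟨rfl, rfl⟩, mul_one]
        rw [coeff_ln, coeff_ln, coeff_one]
        by_cases ht : ∀ x ∈ t, x = c
        · have h4 : ∀ x ∈ t.concat c, x = c := by
            intro x hx
            rw [List.concat_eq_append, List.mem_append] at hx
            rcases hx with hx | hx
            case inr => simpa using hx
            exact ht x hx
          rw [if_pos ht, if_pos h4, hlen]
          simp [coeff_lp, pow_succ]
        · have h4 : ¬ ∀ x ∈ t.concat c, x = c := by
            intro hcon
            exact ht fun x hx => hcon x (by rw [List.concat_eq_append, List.mem_append]; exact Or.inl hx)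
          rw [if_neg ht, if_neg h4]
          simp
      · intro i hi hi0
        simp [hi0]
      · intro h; simp at h
    · have h5 : ∀ i ∈ Finset.range (t.length + 1),
          coeff (ln a) (t.take i) * (if i = t.length ∧ c = a then (1:ℤ) else 0) = 0 := by
        intro i _; simp [hc]
      rw [Finset.sum_congr rfl h5]
      have h6 : ¬ ∀ x ∈ t.concat c, x = a := by
        intro hcon
        exact hc (hcon c (by rw [List.concat_eq_append, List.mem_append]; right; simp))
      rw [coeff_ln, if_neg h6, coeff_one]
      simp

def unitOf (a : ℤ × ℤ) : MSˣ := ⟨lp a, ln a, lp_mul_ln a, ln_mul_lp a⟩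

def mag : FreeGroup (ℤ × ℤ) →* MSˣ := FreeGroup.lift (fun a => unitOf a)

def magS (u : FreeGroup (ℤ × ℤ)) : MS := ((mag u : MSˣ) : MS)

lemma magS_mul (u v : FreeGroup (ℤ × ℤ)) : magS (u * v) = magS u * magS v := by
  simp [magS, map_mul]

lemma magS_one : magS 1 = 1 := by simp [magS]

lemma fold_eq (L : List ((ℤ × ℤ) × Bool)) :
    (L.map letterSeries).foldr convSeries oneSeries
      = coeff ((L.map (fun x => ((cond x.2 (unitOf x.1) (unitOf x.1)⁻¹ : MSˣ) : MS))).prod) := by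
  induction L with
  | nil => rfl
  | cons x L ih =>
    rcases x with ⟨a, b⟩
    cases b <;>
    · simp only [List.map_cons, List.foldr_cons, List.prod_cons, ih]
      rfl

lemma magnus_apply (u : FreeGroup (ℤ × ℤ)) (w : MagnusWord) :
    magnus u w = coeff (magS u) w := by
  have h1 : magnus u = coeff (((FreeGroup.toWord u).map
      (fun x => ((cond x.2 (unitOf x.1) (unitOf x.1)⁻¹ : MSˣ) : MS))).prod) := fold_eq _
  have h2 : mag u = ((FreeGroup.toWord u).map
      (fun x => (cond x.2 (unitOf x.1) (unitOf x.1)⁻¹ : MSˣ))).prod := by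
    conv_lhs => rw [← FreeGroup.mk_toWord (x := u)]
    rw [mag, FreeGroup.lift_mk]
  have h3 : magS u = ((FreeGroup.toWord u).map
      (fun x => ((cond x.2 (unitOf x.1) (unitOf x.1)⁻¹ : MSˣ) : MS))).prod := by
    rw [magS, h2]
    show (Units.coeHom MS) _ = _
    rw [map_list_prod, List.map_map]
    rfl
  rw [h1, h3]

def constHom : MS →+* ℤ where
  toFun f := coeff f []
  map_one' := rfl
  map_mul' f g := by
    show coeff (f * g) [] = coeff f [] * coeff g []
    rw [coeff_mul]
    simp
  map_zero' := rfl
  map_add' f g := rfl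

lemma magS_nil (u : FreeGroup (ℤ × ℤ)) : coeff (magS u) [] = 1 := by
  have h1 : ((Units.map (constHom.toMonoidHom)).comp mag : FreeGroup (ℤ × ℤ) →* ℤˣ)
      = 1 := by
    apply FreeGroup.ext_hom
    intro a
    rw [MonoidHom.comp_apply,
      show mag (FreeGroup.of a) = unitOf a from FreeGroup.lift_apply_of,
      MonoidHom.one_apply]
    apply Units.ext
    show constHom (lp a) = 1
    show coeff (lp a) [] = 1
    simp [coeff_lp]
  have h2 : (Units.map (constHom.toMonoidHom)) (mag u) = 1 := by
    rw [← MonoidHom.comp_apply, h1, MonoidHom.one_apply]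
  have h3 := congrArg Units.val h2
  simp at h3
  exact h3

lemma coeff_mul_single (f g : MS) (b : ℤ × ℤ) :
    coeff (f * g) [b] = coeff f [] * coeff g [b] + coeff f [b] * coeff g [] := by
  rw [coeff_mul]
  simp [Finset.sum_range_succ]

def abHom (b : ℤ × ℤ) : FreeGroup (ℤ × ℤ) →* Multiplicative ℤ where
  toFun u := Multiplicative.ofAdd (coeff (magS u) [b])
  map_one' := by
    simp only [magS_one]
    have : coeff (1 : MS) [b] = 0 := by simp [coeff_one]
    rw [this]
    rfl
  map_mul' u v := by
    simp only [magS_mul, coeff_mul_single, magS_nil, one_mul, mul_one]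
    rw [← ofAdd_add]
    exact congrArg _ (add_comm _ _)

lemma commutator_single (c : FreeGroup (ℤ × ℤ)) (hc : c ∈ commutator (FreeGroup (ℤ × ℤ)))
    (b : ℤ × ℤ) : coeff (magS c) [b] = 0 := by
  have := Abelianization.commutator_subset_ker (abHom b) hc
  rw [MonoidHom.mem_ker] at this
  have h2 : coeff (magS c) [b] = Multiplicative.toAdd (abHom b c) := rfl
  rw [h2, this]
  rfl

lemma fold_supp : ∀ (L : List ((ℤ × ℤ) × Bool)) (v : MagnusWord),
    ((L.map letterSeries).foldr convSeries oneSeries) v ≠ 0 → ∀ a ∈ v, a ∈ L.map Prod.fst := by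
  intro L
  induction L with
  | nil =>
    intro v hv a ha
    by_cases h : v = []
    · subst h; simp at ha
    · exact absurd (by simp [oneSeries, h] : (([] : List _).map letterSeries).foldr convSeries oneSeries v = 0) hv
  | cons x L ih =>
    intro v hv a ha
    have hsum : ∃ i ∈ Finset.range (v.length + 1),
        letterSeries x (v.take i) * ((L.map letterSeries).foldr convSeries oneSeries) (v.drop i) ≠ 0 :=
      Finset.exists_ne_zero_of_sum_ne_zero hv
    rcases hsum with ⟨i, _, hi⟩
    have h1 : letterSeries x (v.take i) ≠ 0 := fun h => hi (by rw [h, zero_mul])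
    have h2 : ((L.map letterSeries).foldr convSeries oneSeries) (v.drop i) ≠ 0 :=
      fun h => hi (by rw [h, mul_zero])
    have htake : ∀ a ∈ v.take i, a = x.1 := by
      rcases x with ⟨y, b⟩
      cases b
      · intro a ha
        by_cases h : ∀ z ∈ v.take i, z = y
        · exact h a ha
        · exact absurd (if_neg h) h1
      · intro a ha
        by_cases h : v.take i = [] ∨ v.take i = [y]
        · rcases h with h | h
          · rw [h] at ha; simp at ha
          · rw [h] at ha; simpa using ha
        · exact absurd (if_neg h) h1
    rw [← List.take_append_drop i v] at ha
    rcases List.mem_append.mp ha with ha | ha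
    · rw [htake a ha]
      simp
    · have := ih (v.drop i) h2 a ha
      simp at this ⊢
      tauto

def wordsLe (T : Finset (ℤ × ℤ)) (k : ℕ) : Finset MagnusWord :=
  (Finset.range (k+1)).biUnion
    (fun i => (Fintype.piFinset (fun _ : Fin i => T)).image List.ofFn)

lemma mem_wordsLe {T : Finset (ℤ × ℤ)} {k : ℕ} {v : MagnusWord} :
    v ∈ wordsLe T k ↔ v.length ≤ k ∧ ∀ a ∈ v, a ∈ T := by
  simp only [wordsLe, Finset.mem_biUnion, Finset.mem_range, Finset.mem_image,
    Fintype.mem_piFinset]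
  constructor
  · rintro ⟨i, hi, f, hf, rfl⟩
    constructor
    · simp only [List.length_ofFn]; omega
    · intro a ha
      rcases List.mem_ofFn.mp ha with ⟨j, rfl⟩
      exact hf j
  · rintro ⟨hlen, hmem⟩
    exact ⟨v.length, by omega, v.get, fun j => hmem _ (v.get_mem j),
      List.ofFn_get v⟩

end MS
end MagnusProof

namespace MagnusProof
namespace MS

def lowOrder (k : ℕ) (f : MS) : Prop := ∀ w : MagnusWord, w.length < k → coeff f w = 0

lemma lowOrder_mul {j k : ℕ} {f g : MS} (hf : lowOrder j f) (hg : lowOrder k g) :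
    lowOrder (j + k) (f * g) := by
  intro w hw
  rw [coeff_mul]
  apply Finset.sum_eq_zero
  intro i hi
  simp only [Finset.mem_range] at hi
  by_cases h : (w.take i).length < j
  · rw [hf _ h, zero_mul]
  · have h2 : (w.drop i).length < k := by
      rw [List.length_take] at h
      rw [List.length_drop]
      omega
    rw [hg _ h2, mul_zero]

lemma lowOrder_neg {k : ℕ} {f : MS} (hf : lowOrder k f) : lowOrder k (-f) := by
  intro w hw; rw [coeff_neg, hf w hw, neg_zero]

lemma lowOrder_pow {f : MS} (hf : lowOrder 1 f) : ∀ k, lowOrder k (f ^ k) := by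
  intro k
  induction k with
  | zero => intro w hw; omega
  | succ k ih =>
    rw [pow_succ]
    have := lowOrder_mul ih hf
    exact this

section Phi

variable (φ : FreeGroup (ℤ × ℤ) →* FreeGroup (ℤ × ℤ))

def hS (a : ℤ × ℤ) : MS :=
  fun w => if w = [] then 0 else coeff (magS (φ (FreeGroup.of a))) w

lemma coeff_hS (a : ℤ × ℤ) (w : MagnusWord) :
    coeff (hS φ a) w = if w = [] then 0 else coeff (magS (φ (FreeGroup.of a))) w := rfl

lemma magS_phi_of (a : ℤ × ℤ) : magS (φ (FreeGroup.of a)) = 1 + hS φ a := by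
  apply ext'; intro w
  rw [coeff_add, coeff_one, coeff_hS]
  by_cases h : w = []
  · subst h; simp [magS_nil]
  · simp [h]

lemma lowOrder_hS (a : ℤ × ℤ) : lowOrder 1 (hS φ a) := by
  intro w hw
  have : w = [] := by
    cases w
    · rfl
    · simp at hw
  subst this
  rfl

def gS (v : MagnusWord) : MS := (v.map (hS φ)).prod

lemma gS_nil : gS φ [] = 1 := rfl

lemma gS_cons (a : ℤ × ℤ) (v : MagnusWord) : gS φ (a :: v) = hS φ a * gS φ v := by
  simp [gS]

lemma gS_append (v v' : MagnusWord) : gS φ (v ++ v') = gS φ v * gS φ v' := by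
  simp [gS]

lemma lowOrder_gS (v : MagnusWord) : lowOrder v.length (gS φ v) := by
  induction v with
  | nil => intro w hw; simp at hw
  | cons a v ih =>
    rw [gS_cons]
    have := lowOrder_mul (lowOrder_hS φ a) ih
    simpa [Nat.add_comm] using this

lemma magS_of (q : ℤ × ℤ) : magS (FreeGroup.of q) = lp q := by
  rw [magS, show mag (FreeGroup.of q) = unitOf q from FreeGroup.lift_apply_of]
  rfl

lemma magS_of_inv (q : ℤ × ℤ) : magS (FreeGroup.of q)⁻¹ = ln q := by
  rw [magS, map_inv, show mag (FreeGroup.of q) = unitOf q from FreeGroup.lift_apply_of]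
  rfl

end Phi

lemma toWord_of_inv (x : ℤ × ℤ) : FreeGroup.toWord (FreeGroup.of x)⁻¹ = [(x, false)] := by
  simp only [FreeGroup.of, FreeGroup.inv_mk, FreeGroup.invRev, List.map_cons, Bool.not_true,
    List.map_nil, List.reverse_cons, List.reverse_nil, List.nil_append, FreeGroup.toWord_mk,
    FreeGroup.reduce]

lemma magS_supp (u : FreeGroup (ℤ × ℤ)) (v : MagnusWord) (h : coeff (magS u) v ≠ 0) :
    ∀ a ∈ v, a ∈ (FreeGroup.toWord u).map Prod.fst := by
  rw [← magnus_apply] at h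
  exact fold_supp _ v h

lemma cancel_right (f q : MS) (hf : coeff f [] = 1) (n : ℕ)
    (h : ∀ w', w'.length ≤ n → coeff (q * f) w' = 0) :
    ∀ w', w'.length ≤ n → coeff q w' = 0 := by
  suffices H : ∀ N, ∀ w' : MagnusWord, w'.length = N → w'.length ≤ n → coeff q w' = 0 by
    intro w' hw'; exact H w'.length w' rfl hw'
  intro N
  induction N using Nat.strong_induction_on with
  | _ N ih =>
    intro w' hlen hle
    have h0 := h w' hle
    rw [coeff_mul, Finset.sum_range_succ] at h0
    have hz : ∀ i ∈ Finset.range w'.length, coeff q (w'.take i) * coeff f (w'.drop i) = 0 := by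
      intro i hi
      simp only [Finset.mem_range] at hi
      have h1 : (w'.take i).length < N := by rw [List.length_take]; omega
      have h2 : (w'.take i).length ≤ n := by rw [List.length_take]; omega
      rw [ih _ h1 (w'.take i) rfl h2, zero_mul]
    rw [Finset.sum_eq_zero hz, List.take_length, List.drop_length, hf, mul_one, zero_add] at h0
    exact h0

end MS
end MagnusProof

namespace MagnusProof
namespace MS

variable (φ : FreeGroup (ℤ × ℤ) →* FreeGroup (ℤ × ℤ))

lemma rep (u : FreeGroup (ℤ × ℤ)) : ∀ (T : Finset (ℤ × ℤ)),
    (∀ x ∈ FreeGroup.toWord u, x.1 ∈ T) → ∀ w : MagnusWord,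
    coeff (magS (φ u)) w
      = ∑ v ∈ wordsLe T w.length, coeff (magS u) v * coeff (gS φ v) w := by
  induction u using FreeGroup.induction_on with
  | C1 =>
    intro T hT w
    rw [map_one, magS_one]
    rw [Finset.sum_eq_single ([] : MagnusWord)]
    · rw [gS_nil]
      simp [coeff_one]
    · intro v hv hv0
      rw [coeff_one, if_neg hv0, zero_mul]
    · intro hmem
      exact absurd (mem_wordsLe.mpr ⟨by simp, by simp⟩) hmem
  | of x =>
    intro T hT w
    replace hT : ∀ y ∈ (FreeGroup.of x).toWord, y.1 ∈ T := hT
    show coeff (magS (φ (FreeGroup.of x))) w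
      = ∑ v ∈ wordsLe T w.length, coeff (magS (FreeGroup.of x)) v * coeff (gS φ v) w
    have hx : x ∈ T := by
      have := hT (x, true) (by rw [FreeGroup.toWord_of]; simp)
      simpa using this
    have hmof : magS (FreeGroup.of x) = lp x := magS_of x
    rw [magS_phi_of φ x, coeff_add, coeff_one]
    by_cases hw : w = []
    · subst hw
      rw [Finset.sum_eq_single ([] : MagnusWord)]
      · rw [hmof, gS_nil, coeff_one, coeff_lp]
        simp [coeff_hS]
      · intro v hv hv0
        rw [mem_wordsLe] at hv
        exact absurd (List.length_eq_zero_iff.mp (Nat.le_zero.mp hv.1)) hv0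
      · intro hmem
        exact absurd (mem_wordsLe.mpr ⟨by simp, by simp⟩) hmem
    · have hn : 1 ≤ w.length := by
        cases w
        · exact absurd rfl hw
        · simp
      rw [← Finset.sum_subset (s₁ := {([] : MagnusWord), [x]})
          (by
            intro v hv
            simp only [Finset.mem_insert, Finset.mem_singleton] at hv
            rcases hv with rfl | rfl
            · exact mem_wordsLe.mpr ⟨by simp, by simp⟩
            · exact mem_wordsLe.mpr ⟨by simpa using hn, by simpa using hx⟩)
          (by
            intro v hv hv2
            simp only [Finset.mem_insert, Finset.mem_singleton, not_or] at hv2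
            rw [hmof, coeff_lp, if_neg (by tauto), zero_mul])]
      rw [Finset.sum_insert (by simp), Finset.sum_singleton]
      rw [hmof, coeff_lp, coeff_lp, gS_nil, coeff_one]
      have hgx : gS φ [x] = hS φ x := by
        simp [gS]
      rw [hgx]
      simp [hw]
  | inv_of x ihx =>
    intro T hT w
    replace hT : ∀ y ∈ ((FreeGroup.of x)⁻¹).toWord, y.1 ∈ T := hT
    show coeff (magS (φ ((FreeGroup.of x)⁻¹))) w
      = ∑ v ∈ wordsLe T w.length, coeff (magS ((FreeGroup.of x)⁻¹)) v * coeff (gS φ v) w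
    have hx : x ∈ T := by
      have := hT (x, false) (by rw [toWord_of_inv]; simp)
      simpa using this
    set n := w.length with hn
    -- LHS : coefficients of the inverse agree with the truncated geometric series
    have hinv : magS (φ (FreeGroup.of x)⁻¹) * (1 + hS φ x) = 1 := by
      rw [← magS_phi_of φ x, ← magS_mul, ← map_mul, inv_mul_cancel, map_one, magS_one]
    set P : MS := ∑ k ∈ Finset.range (n + 1), (-(hS φ x)) ^ k with hP
    have hgeom : P * (1 + hS φ x) = 1 - (-(hS φ x)) ^ (n + 1) := by
      have h1 := geom_sum_mul (-(hS φ x)) (n + 1)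
      have h2 : (1 : MS) + hS φ x = -(-(hS φ x) - 1) := by
        rw [neg_sub, sub_neg_eq_add]
      rw [h2, mul_neg, hP, h1, neg_sub]
    have hdiff : ∀ w', w'.length ≤ n → coeff (P - magS (φ (FreeGroup.of x)⁻¹)) w' = 0 := by
      apply cancel_right (1 + hS φ x) _ (by rw [coeff_add, coeff_one]; simp [coeff_hS]) n
      intro w' hw'
      rw [sub_mul, hgeom, hinv]
      have : (1 : MS) - (-(hS φ x)) ^ (n+1) - 1 = -((-(hS φ x)) ^ (n+1)) :=
        sub_sub_cancel_left 1 ((-(hS φ x)) ^ (n+1))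
      rw [this, coeff_neg]
      rw [lowOrder_pow (lowOrder_neg (lowOrder_hS φ x)) (n+1) w' (by omega)]
      simp
    have hL : coeff (magS (φ (FreeGroup.of x)⁻¹)) w = coeff P w := by
      have := hdiff w (le_refl n)
      rw [coeff_sub] at this
      omega
    rw [hL]
    -- RHS : reduce to powers
    have hms : magS ((FreeGroup.of x)⁻¹) = ln x := magS_of_inv x
    rw [← Finset.sum_subset
        (s₁ := (Finset.range (n+1)).image (fun k => List.replicate k x))
        (by
          intro v hv
          simp only [Finset.mem_image, Finset.mem_range] at hv
          rcases hv with ⟨k, hk, rfl⟩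
          refine mem_wordsLe.mpr ⟨by simp; omega, ?_⟩
          intro a ha
          rw [List.eq_of_mem_replicate ha]
          exact hx)
        (by
          intro v hv hv2
          rw [mem_wordsLe] at hv
          rw [hms, coeff_ln, if_neg, zero_mul]
          intro hall
          apply hv2
          simp only [Finset.mem_image, Finset.mem_range]
          exact ⟨v.length, by omega, (List.eq_replicate_iff.mpr ⟨rfl, hall⟩).symm⟩)]
    rw [Finset.sum_image (by
      intro k1 _ k2 _ heq
      have := congrArg List.length heq
      simpa using this)]
    rw [hP, coeff_sum]
    refine Finset.sum_congr rfl ?_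
    intro k hk
    have e1 : coeff (ln x) (List.replicate k x) = (-1 : ℤ) ^ k := by
      rw [coeff_ln, if_pos (fun z hz => List.eq_of_mem_replicate hz)]
      simp
    have e2 : gS φ (List.replicate k x) = (hS φ x) ^ k := by
      rw [gS, List.map_replicate, List.prod_replicate]
    have e3 : coeff ((-(hS φ x)) ^ k) w = (-1 : ℤ) ^ k * coeff ((hS φ x) ^ k) w := by
      rcases Nat.even_or_odd k with hk2 | hk2
      · rw [hk2.neg_pow, hk2.neg_one_pow, one_mul]
      · rw [hk2.neg_pow, hk2.neg_one_pow, coeff_neg]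
        ring
    rw [hms, e1, e2, e3]
  | mul u v ihu ihv =>
    intro T hT w
    classical
    set n := w.length with hn
    set Tu : Finset (ℤ × ℤ) := ((FreeGroup.toWord u).map Prod.fst).toFinset with hTud
    set Tv : Finset (ℤ × ℤ) := ((FreeGroup.toWord v).map Prod.fst).toFinset with hTvd
    set T' := (T ∪ Tu) ∪ Tv with hT'
    have hTu : ∀ x ∈ FreeGroup.toWord u, x.1 ∈ T' := by
      intro x hx
      simp only [hT', Finset.mem_union, hTud, List.mem_toFinset, List.mem_map]
      exact Or.inl (Or.inr ⟨x, hx, rfl⟩)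
    have hTv : ∀ x ∈ FreeGroup.toWord v, x.1 ∈ T' := by
      intro x hx
      simp only [hT', Finset.mem_union, hTvd, List.mem_toFinset, List.mem_map]
      exact Or.inr ⟨x, hx, rfl⟩
    set W := wordsLe T' n with hW
    have extend : ∀ (z : FreeGroup (ℤ × ℤ)) (w' : MagnusWord), w'.length ≤ n →
        (∑ x ∈ wordsLe T' w'.length, coeff (magS z) x * coeff (gS φ x) w')
          = ∑ x ∈ W, coeff (magS z) x * coeff (gS φ x) w' := by
      intro z w' hw'
      apply Finset.sum_subset
      · intro x hx
        rw [mem_wordsLe] at hx ⊢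
        exact ⟨le_trans hx.1 hw', hx.2⟩
      · intro x hx hxn
        rw [mem_wordsLe] at hx hxn
        have hlen : w'.length < x.length := by
          by_contra hcon
          push_neg at hcon
          exact hxn ⟨hcon, hx.2⟩
        rw [lowOrder_gS φ x w' hlen, mul_zero]
    -- middle form
    have eL : coeff (magS (φ (u * v))) w
        = ∑ x ∈ W, ∑ y ∈ W, coeff (magS u) x * coeff (magS v) y
            * coeff (gS φ x * gS φ y) w := by
      rw [map_mul, magS_mul, coeff_mul]
      have e2 : ∀ i ∈ Finset.range (n+1),
          coeff (magS (φ u)) (w.take i) * coeff (magS (φ v)) (w.drop i)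
            = ∑ x ∈ W, ∑ y ∈ W, (coeff (magS u) x * coeff (gS φ x) (w.take i))
                * (coeff (magS v) y * coeff (gS φ y) (w.drop i)) := by
        intro i hi
        rw [ihu T' hTu (w.take i), ihv T' hTv (w.drop i),
          extend u (w.take i) (by rw [List.length_take]; omega),
          extend v (w.drop i) (by rw [List.length_drop]; omega),
          Finset.sum_mul_sum]
      rw [Finset.sum_congr rfl e2, Finset.sum_comm]
      refine Finset.sum_congr rfl ?_
      intro x _
      rw [Finset.sum_comm]
      refine Finset.sum_congr rfl ?_
      intro y _
      rw [coeff_mul (gS φ x) (gS φ y), Finset.mul_sum]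
      refine Finset.sum_congr rfl ?_
      intro i _
      ring
    rw [eL]
    -- RHS
    have eR : ∑ z ∈ wordsLe T n, coeff (magS (u * v)) z * coeff (gS φ z) w
        = ∑ z ∈ W, coeff (magS (u * v)) z * coeff (gS φ z) w := by
      apply Finset.sum_subset
      · intro x hx
        rw [mem_wordsLe] at hx ⊢
        refine ⟨hx.1, fun a ha => ?_⟩
        simp only [hT', Finset.mem_union]
        exact Or.inl (Or.inl (hx.2 a ha))
      · intro x hx hxn
        rw [mem_wordsLe] at hx hxn
        by_cases hc : coeff (magS (u * v)) x = 0
        · rw [hc, zero_mul]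
        · exfalso
          apply hxn
          refine ⟨hx.1, fun a ha => ?_⟩
          have := magS_supp (u * v) x hc a ha
          rcases List.mem_map.mp this with ⟨p, hp, rfl⟩
          exact hT p hp
    rw [eR]
    have eR2 : ∀ z ∈ W, coeff (magS (u * v)) z * coeff (gS φ z) w
        = ∑ j ∈ Finset.range (z.length + 1),
            coeff (magS u) (z.take j) * coeff (magS v) (z.drop j) * coeff (gS φ z) w := by
      intro z _
      rw [magS_mul, coeff_mul, Finset.sum_mul]
    rw [Finset.sum_congr rfl eR2]
    have hsig := Finset.sum_sigma W (fun z => Finset.range (z.length + 1))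
      (fun q : (_ : MagnusWord) × ℕ =>
        coeff (magS u) (q.1.take q.2) * coeff (magS v) (q.1.drop q.2) * coeff (gS φ q.1) w)
    rw [← hsig]
    have hprod := Finset.sum_product (s := W) (t := W)
      (f := fun p : MagnusWord × MagnusWord =>
        coeff (magS u) p.1 * coeff (magS v) p.2 * coeff (gS φ p.1 * gS φ p.2) w)
    rw [← hprod]
    have hfilt : ∑ p ∈ (W ×ˢ W).filter (fun p => p.1.length + p.2.length ≤ n),
        coeff (magS u) p.1 * coeff (magS v) p.2 * coeff (gS φ p.1 * gS φ p.2) w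
        = ∑ p ∈ W ×ˢ W,
        coeff (magS u) p.1 * coeff (magS v) p.2 * coeff (gS φ p.1 * gS φ p.2) w := by
      apply Finset.sum_subset (Finset.filter_subset _ _)
      intro p hp hpn
      have hlen : n < p.1.length + p.2.length := by
        by_contra hcon
        push_neg at hcon
        exact hpn (Finset.mem_filter.mpr ⟨hp, hcon⟩)
      rw [lowOrder_mul (lowOrder_gS φ p.1) (lowOrder_gS φ p.2) w hlen, mul_zero]
    rw [← hfilt]
    refine Finset.sum_nbij' (fun p => ⟨p.1 ++ p.2, p.1.length⟩)
      (fun q => (q.1.take q.2, q.1.drop q.2)) ?_ ?_ ?_ ?_ ?_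
    · rintro ⟨x, y⟩ hp
      simp only [Finset.mem_filter, Finset.mem_product] at hp
      obtain ⟨⟨hx, hy⟩, hlen⟩ := hp
      rw [mem_wordsLe] at hx hy
      simp only [Finset.mem_sigma, Finset.mem_range]
      constructor
      · rw [mem_wordsLe]
        refine ⟨by rw [List.length_append]; omega, ?_⟩
        intro a ha
        rcases List.mem_append.mp ha with ha | ha
        · exact hx.2 a ha
        · exact hy.2 a ha
      · rw [List.length_append]
        omega
    · rintro ⟨z, j⟩ hq
      simp only [Finset.mem_sigma, Finset.mem_range] at hq
      obtain ⟨hz, hj⟩ := hq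
      rw [mem_wordsLe] at hz
      simp only [Finset.mem_filter, Finset.mem_product]
      have h1 : (z.take j).length = j := by rw [List.length_take]; omega
      have h2 : (z.drop j).length = z.length - j := by rw [List.length_drop]
      refine ⟨⟨?_, ?_⟩, by omega⟩
      · rw [mem_wordsLe]
        exact ⟨by omega, fun a ha => hz.2 a (List.take_subset j z ha)⟩
      · rw [mem_wordsLe]
        exact ⟨by omega, fun a ha => hz.2 a (List.drop_subset j z ha)⟩
    · rintro ⟨x, y⟩ hp
      simp only [List.take_left, List.drop_left]
    · rintro ⟨z, j⟩ hq
      simp only [Finset.mem_sigma, Finset.mem_range] at hq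
      have h1 : z.take j ++ z.drop j = z := List.take_append_drop j z
      have h2 : (z.take j).length = j := by rw [List.length_take]; omega
      simp [Sigma.mk.inj_iff, h1, h2]
    · rintro ⟨x, y⟩ hp
      simp only
      rw [List.take_left, List.drop_left, gS_append]

end MS
end MagnusProof

namespace MagnusProof
namespace MS

section Shifted

variable (m n : ℤ) (φ : FreeGroup (ℤ × ℤ) →* FreeGroup (ℤ × ℤ))
  (hφ : ∀ p : ℤ × ℤ, φ (FreeGroup.of p) * (FreeGroup.of (p.1 + m, p.2 + n))⁻¹ ∈
    commutator (FreeGroup (ℤ × ℤ)))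

include hφ

lemma coeff_hS_single (a b : ℤ × ℤ) :
    coeff (hS φ a) [b] = if b = (a.1 + m, a.2 + n) then 1 else 0 := by
  rw [coeff_hS, if_neg (by simp)]
  have hdecomp : φ (FreeGroup.of a)
      = (φ (FreeGroup.of a) * (FreeGroup.of (a.1 + m, a.2 + n))⁻¹)
          * FreeGroup.of (a.1 + m, a.2 + n) := by
    group
  rw [hdecomp, magS_mul, coeff_mul_single, magS_nil, commutator_single _ (hφ a) b,
    magS_of, coeff_lp]
  simp

lemma coeff_gS_top : ∀ (v w : MagnusWord), v.length = w.length →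
    coeff (gS φ v) w = if w = v.map (fun p => (p.1 + m, p.2 + n)) then 1 else 0 := by
  intro v
  induction v with
  | nil =>
    intro w hw
    have : w = [] := List.length_eq_zero_iff.mp hw.symm
    subst this
    simp [gS_nil, coeff_one]
  | cons a v ih =>
    intro w hw
    cases w with
    | nil => simp at hw
    | cons b w' =>
      rw [gS_cons, coeff_mul]
      simp only [List.length_cons] at hw
      rw [Finset.sum_eq_single 1]
      · have ht : (b :: w').take 1 = [b] := rfl
        have hd : (b :: w').drop 1 = w' := rfl
        rw [ht, hd, coeff_hS_single m n φ hφ a b, ih w' (by omega)]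
        by_cases h1 : b = (a.1 + m, a.2 + n) <;>
          by_cases h2 : w' = v.map (fun p => (p.1 + m, p.2 + n)) <;>
          simp [h1, h2, List.map_cons]
      · intro i hi hi1
        rcases i with _ | i
        · rw [List.take_zero]
          rw [show coeff (hS φ a) [] = 0 from rfl, zero_mul]
        · have hi2 : 1 ≤ i := by omega
          rw [List.drop_succ_cons]
          have hlen : (w'.drop i).length < v.length := by
            simp only [Finset.mem_range, List.length_cons] at hi
            rw [List.length_drop]
            omega
          rw [lowOrder_gS φ v _ hlen, mul_zero]
      · intro hmem
        simp at hmem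

lemma main_est (u : FreeGroup (ℤ × ℤ)) (d : ℕ)
    (hu : ∀ v : MagnusWord, v.length < d → coeff (magS u) v = coeff (1 : MS) v) :
    (∀ w : MagnusWord, w.length < d → coeff (magS (φ u)) w = coeff (1 : MS) w) ∧
    (∀ w : MagnusWord, w ≠ [] → w.length = d →
      coeff (magS (φ u)) w = coeff (magS u) (w.map (fun p => (p.1 - m, p.2 - n)))) := by
  classical
  set T := ((FreeGroup.toWord u).map Prod.fst).toFinset with hTdef
  have hT : ∀ x ∈ FreeGroup.toWord u, x.1 ∈ T := fun x hx =>
    List.mem_toFinset.mpr (List.mem_map.mpr ⟨x, hx, rfl⟩)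
  have hrep := rep φ u T hT
  constructor
  · intro w hw
    rw [hrep w]
    rw [Finset.sum_eq_single ([] : MagnusWord)]
    · rw [magS_nil, gS_nil, one_mul]
    · intro v hv hv0
      rw [mem_wordsLe] at hv
      have hvd : v.length < d := by omega
      rw [hu v hvd, coeff_one, if_neg hv0, zero_mul]
    · intro hmem
      exact absurd (mem_wordsLe.mpr ⟨by simp, by simp⟩) hmem
  · intro w hw0 hwd
    rw [hrep w]
    set v0 : MagnusWord := w.map (fun p => (p.1 - m, p.2 - n)) with hv0def
    have hmap : v0.map (fun p => (p.1 + m, p.2 + n)) = w := by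
      rw [hv0def, List.map_map]
      conv_rhs => rw [← List.map_id w]
      apply List.map_congr_left
      intro p _
      simp
    have hlenv0 : v0.length = w.length := by rw [hv0def, List.length_map]
    rw [Finset.sum_eq_single v0]
    · rw [coeff_gS_top m n φ hφ v0 w (by omega), if_pos hmap.symm, mul_one]
    · intro v hv hvne
      rw [mem_wordsLe] at hv
      by_cases hlen : v.length < d
      · rw [hu v hlen, coeff_one]
        by_cases hvnil : v = []
        · subst hvnil
          rw [if_pos rfl, one_mul, gS_nil, coeff_one, if_neg hw0]
        · rw [if_neg hvnil, zero_mul]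
      · have hlen2 : v.length = w.length := by omega
        rw [coeff_gS_top m n φ hφ v w (by omega), if_neg, mul_zero]
        intro hcon
        apply hvne
        have hback : v.map ((fun p : ℤ × ℤ => (p.1 - m, p.2 - n)) ∘
            fun p : ℤ × ℤ => (p.1 + m, p.2 + n)) = v := by
          conv_rhs => rw [← List.map_id v]
          apply List.map_congr_left
          intro p _
          simp
        rw [hv0def, hcon, List.map_map, hback]
    · intro hmem
      have : coeff (magS u) v0 = 0 := by
        by_contra hc
        apply hmem
        rw [mem_wordsLe]
        refine ⟨by omega, ?_⟩
        intro a ha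
        rw [hTdef, List.mem_toFinset]
        exact magS_supp u v0 hc a ha
      rw [this, zero_mul]

end Shifted

end MS

def shiftW (m n : ℤ) (w : MagnusWord) : MagnusWord := w.map (fun p => (p.1 + m, p.2 + n))

lemma lex_shiftW (m n : ℤ) {w w' : MagnusWord}
    (h : List.Lex (Prod.Lex ((· < ·) : ℤ → ℤ → Prop) ((· < ·) : ℤ → ℤ → Prop)) w w') :
    List.Lex (Prod.Lex ((· < ·) : ℤ → ℤ → Prop) ((· < ·) : ℤ → ℤ → Prop))
      (shiftW m n w) (shiftW m n w') := by
  induction h with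
  | nil => exact List.Lex.nil
  | cons h ih => exact List.Lex.cons ih
  | rel hab =>
    apply List.Lex.rel
    rename_i a l1 b l2
    rcases a with ⟨a1, a2⟩
    rcases b with ⟨b1, b2⟩
    cases hab with
    | left _ _ h1 => exact Prod.Lex.left _ _ (by omega)
    | right _ h2 =>
      exact Prod.Lex.right _ (by omega)

lemma shiftW_shiftW (m n : ℤ) (w : MagnusWord) :
    shiftW (-m) (-n) (shiftW m n w) = w := by
  rw [shiftW, shiftW, List.map_map]
  conv_rhs => rw [← List.map_id w]
  apply List.map_congr_left
  intro p _
  simp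

lemma length_shiftW (m n : ℤ) (w : MagnusWord) : (shiftW m n w).length = w.length :=
  List.length_map _

lemma degLexLt_shiftW (m n : ℤ) {w w' : MagnusWord} (h : degLexLt w w') :
    degLexLt (shiftW m n w) (shiftW m n w') := by
  rcases h with h | ⟨h1, h2⟩
  · exact Or.inl (by rw [length_shiftW, length_shiftW]; exact h)
  · exact Or.inr ⟨by rw [length_shiftW, length_shiftW]; exact h1, lex_shiftW m n h2⟩

end MagnusProof

namespace MagnusProof

open MS

lemma oneSeries_eq_coeff_one (w : MagnusWord) : oneSeries w = MS.coeff (1 : MS) w := rfl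

lemma magnusPos_map (m n : ℤ) (φ : FreeGroup (ℤ × ℤ) →* FreeGroup (ℤ × ℤ))
    (hφ : ∀ p : ℤ × ℤ, φ (FreeGroup.of p) * (FreeGroup.of (p.1 + m, p.2 + n))⁻¹ ∈
      commutator (FreeGroup (ℤ × ℤ)))
    (u : FreeGroup (ℤ × ℤ)) (h : MagnusPos u) : MagnusPos (φ u) := by
  obtain ⟨w₀, hlow, hpos⟩ := h
  have hw0ne : w₀ ≠ [] := by
    intro hcon
    subst hcon
    rw [magnus_apply, magS_nil] at hpos
    exact absurd hpos (by rw [oneSeries]; simp)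
  have hd1 : 1 ≤ w₀.length := by
    cases w₀
    · exact absurd rfl hw0ne
    · simp
  set d := w₀.length with hd
  have hu : ∀ v : MagnusWord, v.length < d → MS.coeff (magS u) v = MS.coeff (1 : MS) v := by
    intro v hv
    have := hlow v (Or.inl hv)
    rw [magnus_apply] at this
    exact this
  obtain ⟨h1, h2⟩ := main_est m n φ hφ u d hu
  refine ⟨shiftW m n w₀, ?_, ?_⟩
  · intro w' hw'
    rcases hw' with hlt | ⟨heq, hlex⟩
    · rw [length_shiftW] at hlt
      rw [magnus_apply, h1 w' hlt, oneSeries_eq_coeff_one]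
    · rw [length_shiftW] at heq
      have hw'ne : w' ≠ [] := by
        intro hcon
        rw [hcon] at heq
        simp at heq
        omega
      rw [magnus_apply, h2 w' hw'ne heq]
      have hsub : w'.map (fun p : ℤ × ℤ => (p.1 - m, p.2 - n)) = shiftW (-m) (-n) w' := by
        rw [shiftW]
        apply List.map_congr_left
        intro p _
        simp [sub_eq_add_neg]
      have hlex2 : degLexLt (w'.map (fun p : ℤ × ℤ => (p.1 - m, p.2 - n))) w₀ := by
        rw [hsub]
        refine Or.inr ⟨by rw [length_shiftW]; omega, ?_⟩
        have := lex_shiftW (-m) (-n) hlex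
        rw [shiftW_shiftW] at this
        exact this
      have := hlow _ hlex2
      rw [magnus_apply] at this
      rw [this]
      have hne2 : w'.map (fun p : ℤ × ℤ => (p.1 - m, p.2 - n)) ≠ [] := by
        simp [hw'ne]
      rw [oneSeries, if_neg hne2, oneSeries, if_neg hw'ne]
  · have hne : shiftW m n w₀ ≠ [] := by
      rw [shiftW]
      simp [hw0ne]
    have hlen : (shiftW m n w₀).length = d := by rw [length_shiftW]
    rw [magnus_apply, h2 (shiftW m n w₀) hne hlen]
    have hback : (shiftW m n w₀).map (fun p : ℤ × ℤ => (p.1 - m, p.2 - n)) = w₀ := by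
      rw [shiftW, List.map_map]
      conv_rhs => rw [← List.map_id w₀]
      apply List.map_congr_left
      intro p _
      simp
    rw [hback, oneSeries, if_neg hne, ← magnus_apply]
    have : oneSeries w₀ = 0 := by rw [oneSeries, if_neg hw0ne]
    rw [this] at hpos
    exact hpos

lemma symm_commutator (φ : FreeGroup (ℤ × ℤ) ≃* FreeGroup (ℤ × ℤ))
    {c : FreeGroup (ℤ × ℤ)} (hc : c ∈ commutator (FreeGroup (ℤ × ℤ))) :
    φ.symm c ∈ commutator (FreeGroup (ℤ × ℤ)) := by
  have hmap : Subgroup.map φ.symm.toMonoidHom (commutator (FreeGroup (ℤ × ℤ)))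
      = commutator (FreeGroup (ℤ × ℤ)) := by
    rw [commutator, Subgroup.map_commutator,
      Subgroup.map_top_of_surjective _ φ.symm.surjective]
  rw [← hmap]
  exact Subgroup.mem_map.mpr ⟨c, hc, rfl⟩

end MagnusProof

theorem MagnusProof.aux_invariant
    (m n : ℤ) (φ : FreeGroup (ℤ × ℤ) ≃* FreeGroup (ℤ × ℤ))
    (hφ : ∀ p : ℤ × ℤ,
      φ (FreeGroup.of p) * (FreeGroup.of (p.1 + m, p.2 + n))⁻¹ ∈
        commutator (FreeGroup (ℤ × ℤ))) :
    ∀ u : FreeGroup (ℤ × ℤ), MagnusPos (φ u) ↔ MagnusPos u := by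
  intro u
  have hφ' : ∀ p : ℤ × ℤ, φ.toMonoidHom (FreeGroup.of p)
      * (FreeGroup.of (p.1 + m, p.2 + n))⁻¹ ∈ commutator (FreeGroup (ℤ × ℤ)) := hφ
  have hφsymm : ∀ p : ℤ × ℤ, φ.symm.toMonoidHom (FreeGroup.of p)
      * (FreeGroup.of (p.1 + -m, p.2 + -n))⁻¹ ∈ commutator (FreeGroup (ℤ × ℤ)) := by
    intro p
    have h0 := hφ (p.1 - m, p.2 - n)
    have heq : ((p.1 - m : ℤ), (p.2 - n : ℤ)).1 + m = p.1 := by ring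
    have heq2 : ((p.1 - m : ℤ), (p.2 - n : ℤ)).2 + n = p.2 := by ring
    rw [heq, heq2] at h0
    have h1 := MagnusProof.symm_commutator φ h0
    rw [map_mul, map_inv, MulEquiv.symm_apply_apply] at h1
    have h2 := inv_mem h1
    rw [mul_inv_rev, inv_inv] at h2
    have heq3 : (p.1 + -m, p.2 + -n) = ((p.1 - m : ℤ), (p.2 - n : ℤ)) := by
      simp [sub_eq_add_neg]
    rw [heq3]
    exact h2
  constructor
  · intro h
    have h2 := MagnusProof.magnusPos_map (-m) (-n) φ.symm.toMonoidHom hφsymm (φ u) h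
    simpa using h2
  · intro h
    exact MagnusProof.magnusPos_map m n φ.toMonoidHom hφ' u h

/-- The Magnus bi-ordering of the free group `F` on generators `x_{i,j}`,
`(i,j) ∈ ℤ²`, is invariant under any automorphism `φ` of `F` inducing on the
abelianization the uniform shift `x̃_{i,j} ↦ x̃_{i+m,j+n}`. -/
theorem magnus_ordering_invariant_under_shift_automorphism
    (m n : ℤ) (φ : FreeGroup (ℤ × ℤ) ≃* FreeGroup (ℤ × ℤ))
    (hφ : ∀ p : ℤ × ℤ,
      φ (FreeGroup.of p) * (FreeGroup.of (p.1 + m, p.2 + n))⁻¹ ∈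
        commutator (FreeGroup (ℤ × ℤ))) :
    ∀ u : FreeGroup (ℤ × ℤ), MagnusPos (φ u) ↔ MagnusPos u := by
  intro u
  exact MagnusProof.aux_invariant m n φ hφ u
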